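/- Define the form h on L₂(ℝ) by D(h) = L₂(−∞,0) ⊕ W^{1,2}(0,∞) and h(φ) = ∫₀^∞ |φ′|², and let Ω = (0,∞). Then the relative capacity of {0} with respect to Ω satisfies cap_Ω({0}) ≥ (4π)^{−1}; in particular cap_Ω({0}) ≠ 0. -/

import Mathlib

open MeasureTheory Filter Topology Set
open scoped ENNReal

namespace DirichletPaper

/-- The capacity of `{0}` relative to `Ω = (0,∞)` with respect to the Dirichlet form `h`
on `L₂(ℝ)` with `D(h) = L₂(-∞,0) ⊕ W^{1,2}(0,∞)` and `h(φ) = ∫₀^∞ |φ′|²`.  An element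
`φ` of `D(h)` is encoded as a function of `L₂(ℝ)` which is locally absolutely continuous
on `(0,∞)` with derivative `g ∈ L₂(0,∞)` there, and `‖φ‖²_{D(h)} = ‖φ‖₂² + ∫₀^∞ g²`.
The capacity is the infimum of `‖φ‖²_{D(h)}` over all `φ ∈ D(h)` for which there is an
open set `V ∋ 0` with `φ ≥ 1` a.e. on `V ∩ Ω`. -/
noncomputable def capHalfLineAtZero : ℝ≥0∞ :=
  sInf {r : ℝ≥0∞ | ∃ φ g : ℝ → ℝ, MemLp φ 2 volume ∧
    IntegrableOn (fun x => g x ^ 2) (Set.Ioi 0) volume ∧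
    (∀ a b : ℝ, 0 < a → a ≤ b → φ b = φ a + ∫ x in a..b, g x) ∧
    (∃ V : Set ℝ, IsOpen V ∧ (0 : ℝ) ∈ V ∧ ∀ᵐ x ∂volume, x ∈ V ∩ Set.Ioi 0 → 1 ≤ φ x) ∧
    r = ENNReal.ofReal ((∫ x, φ x ^ 2) + ∫ x in Set.Ioi 0, g x ^ 2)}

/-- Key analytic lemma: any admissible pair `(φ, g)` has energy at least `(4π)⁻¹`. -/
theorem key_lower_bound (φ g : ℝ → ℝ) (hφ : MemLp φ 2 volume)
    (hg2 : IntegrableOn (fun x => g x ^ 2) (Set.Ioi 0) volume)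
    (hAC : ∀ a b : ℝ, 0 < a → a ≤ b → φ b = φ a + ∫ x in a..b, g x)
    (V : Set ℝ) (hVo : IsOpen V) (hV0 : (0 : ℝ) ∈ V)
    (hVae : ∀ᵐ x ∂volume, x ∈ V ∩ Set.Ioi 0 → 1 ≤ φ x) :
    (4 * Real.pi)⁻¹ ≤ (∫ x, φ x ^ 2) + ∫ x in Set.Ioi 0, g x ^ 2 := by
  have hπ : (3 : ℝ) < Real.pi := Real.pi_gt_three
  set G2 : ℝ := ∫ x in Set.Ioi 0, g x ^ 2 with hG2def
  have hG2nonneg : 0 ≤ G2 :=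
    setIntegral_nonneg measurableSet_Ioi fun x _ => sq_nonneg _
  have hφsq : Integrable (fun x => φ x ^ 2) volume := hφ.integrable_sq
  have hφint_nonneg : 0 ≤ ∫ x, φ x ^ 2 := integral_nonneg fun x => sq_nonneg _
  by_cases hcase : (4 * Real.pi)⁻¹ ≤ G2
  · linarith
  push_neg at hcase
  have h4π : (0:ℝ) < 4 * Real.pi := by linarith
  have hG2lt : G2 < 1 / 4 := by
    have : (4 * Real.pi)⁻¹ ≤ 1 / 4 := by
      rw [inv_le_comm₀ (by linarith) (by norm_num)]
      linarith
    linarith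
  have hsqrtG2 : Real.sqrt G2 < 1 / 2 := by
    have h1 : Real.sqrt G2 < Real.sqrt (1 / 4) :=
      (Real.sqrt_lt_sqrt hG2nonneg hG2lt)
    have h2 : Real.sqrt (1 / 4) = 1 / 2 := by
      rw [show (1:ℝ)/4 = (1/2)^2 by norm_num, Real.sqrt_sq (by norm_num)]
    linarith
  -- Claim A: φ ≥ 1/2 on (0, 1]
  have claimA : ∀ x ∈ Set.Ioc (0:ℝ) 1, (1:ℝ)/2 ≤ φ x := by
    intro x hx
    obtain ⟨hx0, hx1⟩ := hx
    obtain ⟨δ, hδ0, hδV⟩ := Metric.isOpen_iff.mp hVo 0 hV0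
    set ε : ℝ := min δ x with hεdef
    have hε0 : 0 < ε := lt_min hδ0 hx0
    have hsub : Set.Ioo 0 ε ⊆ V ∩ Set.Ioi 0 := by
      intro a ha
      refine ⟨hδV ?_, ha.1⟩
      rw [Metric.mem_ball, Real.dist_eq, sub_zero, abs_of_pos ha.1]
      exact lt_of_lt_of_le ha.2 (min_le_left _ _)
    have hne : (ae (volume.restrict (Set.Ioo 0 ε))).NeBot := by
      refine ae_neBot.mpr fun h => ?_
      have h2 : volume (Set.Ioo 0 ε) = 0 := by
        have := congrArg (fun m : Measure ℝ => m Set.univ) h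
        simpa [Measure.restrict_apply_univ] using this
      rw [Real.volume_Ioo] at h2
      rw [ENNReal.ofReal_eq_zero] at h2
      linarith
    have hmem : ∀ᵐ a ∂(volume.restrict (Set.Ioo 0 ε)), a ∈ Set.Ioo 0 ε :=
      ae_restrict_mem measurableSet_Ioo
    have hφ1 : ∀ᵐ a ∂(volume.restrict (Set.Ioo 0 ε)),
        (a ∈ V ∩ Set.Ioi 0 → 1 ≤ φ a) := ae_restrict_of_ae hVae
    obtain ⟨a, haφ, ha⟩ := (hφ1.and hmem).exists
    have h1a : 1 ≤ φ a := haφ (hsub ha)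
    have hax : a ≤ x := le_trans ha.2.le (min_le_right _ _)
    have hform := hAC a x ha.1 hax
    -- bound the interval integral
    have hIocsub : Set.Ioc a x ⊆ Set.Ioi 0 := fun t ht => lt_trans ha.1 ht.1
    set μ' := volume.restrict (Set.Ioc a x) with hμ'def
    haveI : IsFiniteMeasure μ' := by
      constructor
      rw [hμ'def, Measure.restrict_apply_univ, Real.volume_Ioc]
      exact ENNReal.ofReal_lt_top
    have hg2' : Integrable (fun t => g t ^ 2) μ' := hg2.mono_set hIocsub
    have habs_sm : AEStronglyMeasurable (fun t => |g t|) μ' := by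
      have h1 : AEStronglyMeasurable (fun t => g t ^ 2) μ' := hg2'.1
      have h2 : AEStronglyMeasurable (fun t => Real.sqrt (g t ^ 2)) μ' :=
        Real.continuous_sqrt.comp_aestronglyMeasurable h1
      refine h2.congr (Filter.Eventually.of_forall fun t => ?_)
      exact Real.sqrt_sq_eq_abs (g t)
    have habsℒ2 : MemLp (fun t => |g t|) 2 μ' := by
      rw [memLp_two_iff_integrable_sq habs_sm]
      refine hg2'.congr (Filter.Eventually.of_forall fun t => ?_)
      exact (sq_abs (g t)).symm
    have honeℒ2 : MemLp (fun _ : ℝ => (1:ℝ)) 2 μ' := memLp_const 1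
    have hCS : ∫ t, |g t| ∂μ' ≤ Real.sqrt G2 * 1 := by
      have hpq : (2:ℝ).HolderConjugate 2 := by
        constructor <;> norm_num
      have := integral_mul_le_Lp_mul_Lq_of_nonneg hpq
        (f := fun t => |g t|) (g := fun _ => (1:ℝ))
        (Filter.Eventually.of_forall fun t => abs_nonneg _)
        (Filter.Eventually.of_forall fun _ => zero_le_one)
        (by simpa using habsℒ2) (by simpa using honeℒ2) (μ := μ')
      simp only [mul_one] at this
      have heq1 : ∫ t, |g t| ^ (2:ℝ) ∂μ' = ∫ t, g t ^ 2 ∂μ' := by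
        refine integral_congr_ae (Filter.Eventually.of_forall fun t => ?_)
        show |g t| ^ (2:ℝ) = g t ^ 2
        rw [show ((2:ℝ) = ((2:ℕ):ℝ)) by norm_num, Real.rpow_natCast, sq_abs]
      have heq2 : ∫ _t, (1:ℝ) ^ (2:ℝ) ∂μ' = x - a := by
        simp only [Real.one_rpow]
        rw [hμ'def, integral_const, measureReal_restrict_apply_univ, Real.volume_real_Ioc_of_le hax,
          smul_eq_mul, mul_one]
      rw [heq1, heq2] at this
      refine le_trans this ?_
      have hb1 : (∫ t, g t ^ 2 ∂μ') ^ ((1:ℝ)/2) ≤ Real.sqrt G2 := by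
        rw [← Real.sqrt_eq_rpow]
        refine Real.sqrt_le_sqrt ?_
        rw [hG2def, hμ'def]
        exact setIntegral_mono_set hg2
          (Filter.Eventually.of_forall fun t => sq_nonneg _)
          (HasSubset.Subset.eventuallyLE hIocsub)
      have hb2 : (x - a) ^ ((1:ℝ)/2) ≤ 1 := by
        refine Real.rpow_le_one (by linarith [ha.1, hax]) ?_ (by norm_num)
        have : x ≤ 1 := hx1
        linarith [ha.1]
      have hnn : (0:ℝ) ≤ (∫ t, g t ^ 2 ∂μ') ^ ((1:ℝ)/2) :=
        Real.rpow_nonneg (integral_nonneg fun t => sq_nonneg _) _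
      calc (∫ t, g t ^ 2 ∂μ') ^ ((1:ℝ)/2) * (x - a) ^ ((1:ℝ)/2)
          ≤ (∫ t, g t ^ 2 ∂μ') ^ ((1:ℝ)/2) * 1 := by
            exact mul_le_mul_of_nonneg_left hb2 hnn
        _ = (∫ t, g t ^ 2 ∂μ') ^ ((1:ℝ)/2) := mul_one _
        _ ≤ Real.sqrt G2 := hb1
        _ = Real.sqrt G2 * 1 := (mul_one _).symm
    have hIbound : |∫ t in a..x, g t| ≤ Real.sqrt G2 := by
      rw [intervalIntegral.integral_of_le hax]
      calc |∫ t in Set.Ioc a x, g t| ≤ ∫ t in Set.Ioc a x, |g t| := by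
            simpa using norm_integral_le_integral_norm (μ := μ') g
        _ ≤ Real.sqrt G2 * 1 := hCS
        _ = Real.sqrt G2 := mul_one _
    have : -(1/2 : ℝ) ≤ ∫ t in a..x, g t := by
      have := abs_le.mp hIbound
      linarith [this.1, hsqrtG2]
    rw [hform]
    linarith
  -- Claim B: the L² norm of φ is at least 1/4
  have claimB : (1:ℝ)/4 ≤ ∫ x, φ x ^ 2 := by
    have h1 : ∫ x in Set.Ioc (0:ℝ) 1, φ x ^ 2 ≤ ∫ x, φ x ^ 2 :=
      setIntegral_le_integral hφsq (Filter.Eventually.of_forall fun x => sq_nonneg _)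
    have h2 : ∫ x in Set.Ioc (0:ℝ) 1, ((1:ℝ)/4) ≤ ∫ x in Set.Ioc (0:ℝ) 1, φ x ^ 2 := by
      refine setIntegral_mono_on (integrableOn_const ?_) hφsq.integrableOn
        measurableSet_Ioc ?_
      · rw [Real.volume_Ioc]; exact ENNReal.ofReal_ne_top
      · intro x hx
        have h12 : (1:ℝ)/2 ≤ φ x := claimA x hx
        have : ((1:ℝ)/2) ^ 2 ≤ φ x ^ 2 := pow_le_pow_left₀ (by norm_num) h12 2
        calc (1:ℝ)/4 = ((1:ℝ)/2)^2 := by norm_num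
          _ ≤ φ x ^ 2 := this
    have h3 : ∫ x in Set.Ioc (0:ℝ) 1, ((1:ℝ)/4) = 1/4 := by
      rw [setIntegral_const, Real.volume_real_Ioc_of_le (by norm_num), smul_eq_mul]
      norm_num
    linarith
  have hfinal : (4 * Real.pi)⁻¹ ≤ 1/4 := by
    rw [inv_le_comm₀ (by linarith) (by norm_num)]
    linarith
  linarith

/-- For the form `h` on `L₂(ℝ)` with `D(h) = L₂(-∞,0) ⊕ W^{1,2}(0,∞)`,
`h(φ) = ∫₀^∞ |φ′|²` and `Ω = (0,∞)`, one has `cap_Ω({0}) ≥ (4π)⁻¹`; in particular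
`cap_Ω({0}) ≠ 0`. -/
theorem statement16 :
    ENNReal.ofReal ((4 * Real.pi)⁻¹) ≤ capHalfLineAtZero ∧ capHalfLineAtZero ≠ 0 := by
  have hle : ENNReal.ofReal ((4 * Real.pi)⁻¹) ≤ capHalfLineAtZero := by
    refine le_sInf ?_
    rintro r ⟨φ, g, hφ, hg2, hAC, ⟨V, hVo, hV0, hVae⟩, rfl⟩
    exact ENNReal.ofReal_le_ofReal
      (key_lower_bound φ g hφ hg2 hAC V hVo hV0 hVae)
  refine ⟨hle, ?_⟩
  have hpos : (0:ℝ≥0∞) < ENNReal.ofReal ((4 * Real.pi)⁻¹) := by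
    rw [ENNReal.ofReal_pos]
    have := Real.pi_pos
    positivity
  exact (lt_of_lt_of_le hpos hle).ne'

end DirichletPaper
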